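/- Let X be a standard Borel space, let μ₀ be a probability measure on X, let 𝒢 : X → ℝᵐ be measurable, and let Γ be a symmetric positive definite real m×m matrix. On a probability space let θ be an X-valued random variable with law μ₀ and let η be an ℝᵐ-valued random variable with the multivariate Gaussian law N(0, Γ), with θ and η independent. Set Y := 𝒢(θ) + η, and define Φ(u; y) := ½ ⟨y − 𝒢(u), Γ⁻¹ (y − 𝒢(u))⟩ and Z(y) := ∫_X exp(−Φ(u; y)) dμ₀(u). Then Z(y) ∈ (0, 1] for every y ∈ ℝᵐ, and for (law of Y)-almost every y ∈ ℝᵐ, the regular conditional distribution of θ given Y = y equals the probability measure whose density with respect to μ₀ is exp(−Φ(·; y))/Z(y). -/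

import Mathlib

open MeasureTheory Matrix
open ProbabilityTheory
open scoped ENNReal

set_option maxHeartbeats 1000000 in
/-- Bayes' formula for the Bayesian inverse problem with additive Gaussian noise:
if `θ ∼ μ₀` and `η ∼ N(0, Γ)` are independent and `Y = 𝒢(θ) + η`, then the model
evidence `Z(y) = ∫ exp(−Φ(u; y)) dμ₀(u)` lies in `(0, 1]` for every `y`, and for
`(law of Y)`-almost every `y` the regular conditional distribution of `θ` given `Y = y`
has `μ₀`-density `exp(−Φ(·; y))/Z(y)`, where
`Φ(u; y) = ½⟨y − 𝒢(u), Γ⁻¹(y − 𝒢(u))⟩`. -/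
theorem bayes_formula_gaussian_noise
    {X : Type*} [MeasurableSpace X] [StandardBorelSpace X] [Nonempty X]
    {m : ℕ}
    (μ₀ : Measure X) [IsProbabilityMeasure μ₀]
    (𝒢 : X → (Fin m → ℝ)) (h𝒢 : Measurable 𝒢)
    (Γ : Matrix (Fin m) (Fin m) ℝ) (hΓ : Γ.PosDef)
    {Ω : Type*} [MeasurableSpace Ω] (P : Measure Ω) [IsProbabilityMeasure P]
    (θ : Ω → X) (η : Ω → (Fin m → ℝ))
    (hθ : Measurable θ) (hη : Measurable η)
    (hlawθ : P.map θ = μ₀)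
    (hlawη : P.map η = volume.withDensity (fun v => ENNReal.ofReal
      ((Real.sqrt ((2 * Real.pi) ^ m * Γ.det))⁻¹ *
        Real.exp (-(1 / 2) * (v ⬝ᵥ (Γ⁻¹ *ᵥ v))))))
    (hindep : ProbabilityTheory.IndepFun θ η P)
    (Y : Ω → (Fin m → ℝ)) (hY : Y = fun ω => 𝒢 (θ ω) + η ω)
    (Φ : X → (Fin m → ℝ) → ℝ)
    (hΦ : Φ = fun u y => (1 / 2) * ((y - 𝒢 u) ⬝ᵥ (Γ⁻¹ *ᵥ (y - 𝒢 u))))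
    (Z : (Fin m → ℝ) → ℝ)
    (hZ : Z = fun y => ∫ u, Real.exp (-Φ u y) ∂μ₀) :
    (∀ y, 0 < Z y ∧ Z y ≤ 1) ∧
    (∀ᵐ y ∂(P.map Y),
      ProbabilityTheory.condDistrib θ Y P y
        = (ENNReal.ofReal (Z y))⁻¹ •
            μ₀.withDensity (fun u => ENNReal.ofReal (Real.exp (-Φ u y)))) := by
  classical
  -- notation
  set c : ℝ := (Real.sqrt ((2 * Real.pi) ^ m * Γ.det))⁻¹ with hc
  set g : (Fin m → ℝ) → ℝ≥0∞ :=
    fun v => ENNReal.ofReal (c * Real.exp (-(1 / 2) * (v ⬝ᵥ (Γ⁻¹ *ᵥ v)))) with hgdef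
  set N : Measure (Fin m → ℝ) := volume.withDensity g with hNdef
  have hc_nonneg : 0 ≤ c := inv_nonneg.2 (Real.sqrt_nonneg _)
  -- the quadratic form is nonnegative
  have hQ : ∀ w : Fin m → ℝ, 0 ≤ w ⬝ᵥ Γ⁻¹ *ᵥ w := by
    intro w
    have := (hΓ.inv).posSemidef.re_dotProduct_nonneg w
    simpa using this
  -- continuity of the quadratic form
  have hqc : Continuous fun w : Fin m → ℝ => w ⬝ᵥ Γ⁻¹ *ᵥ w := by
    simp only [dotProduct, Matrix.mulVec]
    exact continuous_finset_sum _ fun i _ =>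
      (continuous_apply i).mul (continuous_finset_sum _ fun j _ =>
        (continuous_const.mul (continuous_apply j)))
  -- measurability of Φ, jointly
  have hΦm : Measurable fun p : X × (Fin m → ℝ) => Φ p.1 p.2 := by
    subst hΦ
    exact measurable_const.mul
      (hqc.measurable.comp (measurable_snd.sub (h𝒢.comp measurable_fst)))
  have hΦmy : ∀ y, Measurable fun u => Φ u y := fun y =>
    hΦm.comp (measurable_id.prodMk measurable_const)
  have hΦ_nonneg : ∀ u y, 0 ≤ Φ u y := by
    intro u y; rw [hΦ]; exact mul_nonneg (by norm_num) (hQ _)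
  have hexp_le : ∀ u y, Real.exp (-Φ u y) ≤ 1 := fun u y => by
    rw [← Real.exp_zero]
    exact Real.exp_le_exp.2 (by simpa using hΦ_nonneg u y)
  have hint : ∀ y, Integrable (fun u => Real.exp (-Φ u y)) μ₀ := by
    intro y
    refine Integrable.mono' (integrable_const 1)
      ((Real.measurable_exp.comp (hΦmy y).neg).aestronglyMeasurable)
      (ae_of_all _ fun u => ?_)
    rw [Real.norm_eq_abs, abs_of_pos (Real.exp_pos _)]
    exact hexp_le u y
  -- Z ∈ (0, 1]
  have hZpos : ∀ y, 0 < Z y := by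
    intro y
    rw [hZ]
    rw [integral_pos_iff_support_of_nonneg (fun u => (Real.exp_pos _).le) (hint y)]
    have : Function.support (fun u => Real.exp (-Φ u y)) = Set.univ := by
      ext u; simp [Real.exp_ne_zero]
    rw [this]
    simp
  have hZle : ∀ y, Z y ≤ 1 := by
    intro y
    rw [hZ]
    calc (∫ u, Real.exp (-Φ u y) ∂μ₀) ≤ ∫ _, (1 : ℝ) ∂μ₀ :=
          integral_mono (hint y) (integrable_const 1) fun u => hexp_le u y
      _ = 1 := by simp
  have hZne0 : ∀ y, ENNReal.ofReal (Z y) ≠ 0 := fun y => by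
    simp [ENNReal.ofReal_eq_zero, not_le, hZpos y]
  have hZneT : ∀ y, ENNReal.ofReal (Z y) ≠ ⊤ := fun y => ENNReal.ofReal_ne_top
  -- the relation between g and Φ
  have hgΦ : ∀ u y, g (y - 𝒢 u) = ENNReal.ofReal (c * Real.exp (-Φ u y)) := by
    intro u y
    rw [hgdef, hΦ]
    ring_nf
  -- measurability of the density of the kernel
  have hdm : Measurable fun p : (Fin m → ℝ) × X =>
      ENNReal.ofReal (Real.exp (-Φ p.2 p.1)) :=
    ENNReal.measurable_ofReal.comp <| Real.measurable_exp.comp <|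
      (hΦm.comp measurable_swap).neg
  -- measurability of Z
  have hZm : Measurable Z := by
    rw [hZ]
    refine StronglyMeasurable.measurable ?_
    apply MeasureTheory.StronglyMeasurable.integral_prod_right (f := fun (y : Fin m → ℝ) (u : X) => Real.exp (-Φ u y))
    exact (Real.measurable_exp.comp (hΦm.comp measurable_swap).neg).stronglyMeasurable
  -- the candidate kernel
  set κ : ProbabilityTheory.Kernel (Fin m → ℝ) X :=
    ⟨fun y => (ENNReal.ofReal (Z y))⁻¹ •
        μ₀.withDensity (fun u => ENNReal.ofReal (Real.exp (-Φ u y))), by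
      refine Measure.measurable_of_measurable_coe _ fun s hs => ?_
      simp only [Measure.smul_apply, smul_eq_mul]
      refine Measurable.mul ?_ ?_
      · exact ((ENNReal.measurable_ofReal.comp hZm).inv)
      · simp_rw [withDensity_apply _ hs, ← lintegral_indicator hs]
        exact Measurable.lintegral_prod_right
          (f := fun (y : Fin m → ℝ) (u : X) =>
            s.indicator (fun u => ENNReal.ofReal (Real.exp (-Φ u y))) u) <|
          (hdm.indicator (measurable_snd hs))⟩ with hκdef
  have hκ_app : ∀ y, κ y = (ENNReal.ofReal (Z y))⁻¹ •
      μ₀.withDensity (fun u => ENNReal.ofReal (Real.exp (-Φ u y))) := fun y => rfl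
  -- ∫⁻ of the density equals ofReal (Z y)
  have hlin : ∀ y, (∫⁻ u, ENNReal.ofReal (Real.exp (-Φ u y)) ∂μ₀) = ENNReal.ofReal (Z y) := by
    intro y
    rw [hZ, ← ofReal_integral_eq_lintegral_ofReal (hint y)
      (ae_of_all _ fun u => (Real.exp_pos _).le)]
  haveI : IsMarkovKernel κ := by
    constructor
    intro y
    constructor
    rw [hκ_app]
    simp only [Measure.smul_apply, smul_eq_mul, withDensity_apply _ MeasurableSet.univ,
      Measure.restrict_univ]
    rw [hlin y, ENNReal.inv_mul_cancel (hZne0 y) (hZneT y)]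
  -- measurability of Y
  have hYm : Measurable Y := by rw [hY]; exact (h𝒢.comp hθ).add hη
  -- joint law of (θ, η)
  have hjoint : P.map (fun ω => (θ ω, η ω)) = μ₀.prod N := by
    rw [(ProbabilityTheory.indepFun_iff_map_prod_eq_prod_map_map hθ.aemeasurable
      hη.aemeasurable).mp hindep, hlawθ, hlawη]
  -- the map F
  set F : X × (Fin m → ℝ) → (Fin m → ℝ) × X := fun p => (𝒢 p.1 + p.2, p.1) with hF
  have hFm : Measurable F := ((h𝒢.comp measurable_fst).add measurable_snd).prodMk measurable_fst
  have hTmap : P.map (fun ω => (Y ω, θ ω)) = (μ₀.prod N).map F := by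
    rw [← hjoint, Measure.map_map hFm (hθ.prodMk hη)]
    subst hY; rfl
  haveI : IsProbabilityMeasure N := by
    rw [← hlawη]; exact Measure.isProbabilityMeasure_map hη.aemeasurable
  -- key rectangle computation
  have hgm : Measurable g := by
    rw [hgdef]
    exact ENNReal.measurable_ofReal.comp
      (measurable_const.mul (Real.measurable_exp.comp (measurable_const.mul hqc.measurable)))
  have hK : ∀ {A : Set (Fin m → ℝ)} {B : Set X}, MeasurableSet A → MeasurableSet B →
      (P.map fun ω => (Y ω, θ ω)) (A ×ˢ B)
        = ∫⁻ u, B.indicator (fun u => ∫⁻ y, A.indicator (fun y => g (y - 𝒢 u)) y) u ∂μ₀ := by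
    intro A B hA hB
    rw [hTmap, Measure.map_apply hFm (hA.prod hB), Measure.prod_apply (hFm (hA.prod hB))]
    refine lintegral_congr fun u => ?_
    by_cases hu : u ∈ B
    · rw [Set.indicator_of_mem hu]
      have hpre : (Prod.mk u ⁻¹' (F ⁻¹' A ×ˢ B)) = (fun v => 𝒢 u + v) ⁻¹' A := by
        ext v; simp [hF, Set.mem_prod, hu]
      rw [hpre, hNdef, withDensity_apply _ (hA.preimage (show Measurable fun v : Fin m → ℝ => 𝒢 u + v from measurable_const.add measurable_id))]
      have : ∫⁻ v in (fun v => 𝒢 u + v) ⁻¹' A, g v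
          = ∫⁻ v, A.indicator (fun y => g (y - 𝒢 u)) (𝒢 u + v) := by
        rw [← lintegral_indicator (hA.preimage (show Measurable fun v : Fin m → ℝ => 𝒢 u + v from measurable_const.add measurable_id))]
        refine lintegral_congr fun v => ?_
        by_cases hv : 𝒢 u + v ∈ A
        · rw [Set.indicator_of_mem hv, Set.indicator_of_mem (by simpa using hv)]
          simp
        · rw [Set.indicator_of_notMem hv, Set.indicator_of_notMem (by simpa using hv)]
      rw [this, lintegral_add_left_eq_self (fun y => A.indicator (fun y => g (y - 𝒢 u)) y) (𝒢 u)]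
    · rw [Set.indicator_of_notMem hu]
      have hpre : (Prod.mk u ⁻¹' (F ⁻¹' A ×ˢ B)) = ∅ := by
        ext v; simp [hF, Set.mem_prod, hu]
      rw [hpre]; simp
  -- the law of Y as a density w.r.t. Lebesgue
  set ρ : (Fin m → ℝ) → ℝ≥0∞ := fun y => ENNReal.ofReal c * ENNReal.ofReal (Z y) with hρdef
  have hρm : Measurable ρ := (ENNReal.measurable_ofReal.comp hZm).const_mul _
  have hinner : ∀ u y, g (y - 𝒢 u) = ENNReal.ofReal c * ENNReal.ofReal (Real.exp (-Φ u y)) := by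
    intro u y
    rw [hgΦ u y, ENNReal.ofReal_mul hc_nonneg]
  have hdm' : ∀ y : Fin m → ℝ, Measurable fun u : X => ENNReal.ofReal (Real.exp (-Φ u y)) :=
    fun y => ENNReal.measurable_ofReal.comp (Real.measurable_exp.comp (hΦmy y).neg)
  have hinner_int : ∀ y, (∫⁻ u, g (y - 𝒢 u) ∂μ₀) = ρ y := by
    intro y
    simp_rw [hinner]
    rw [lintegral_const_mul _ (hdm' y), hlin y]
  -- Tonelli swap for the rectangle formula
  have hswap : ∀ {A : Set (Fin m → ℝ)} {B : Set X}, MeasurableSet A → MeasurableSet B →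
      (∫⁻ u, B.indicator (fun u => ∫⁻ y, A.indicator (fun y => g (y - 𝒢 u)) y) u ∂μ₀)
        = ∫⁻ y, A.indicator (fun y => ∫⁻ u, B.indicator (fun u => g (y - 𝒢 u)) u ∂μ₀) y := by
    intro A B hA hB
    have hm : Measurable (Function.uncurry fun (u : X) (y : Fin m → ℝ) =>
        (B ×ˢ A).indicator (fun p : X × (Fin m → ℝ) => g (p.2 - 𝒢 p.1)) (u, y)) := by
      refine Measurable.indicator ?_ (hB.prod hA)
      exact hgm.comp (measurable_snd.sub (h𝒢.comp measurable_fst))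
    have h1 : ∀ u, B.indicator (fun u => ∫⁻ y, A.indicator (fun y => g (y - 𝒢 u)) y) u
        = ∫⁻ y, (B ×ˢ A).indicator (fun p : X × (Fin m → ℝ) => g (p.2 - 𝒢 p.1)) (u, y) := by
      intro u
      by_cases hu : u ∈ B
      · rw [Set.indicator_of_mem hu]
        refine lintegral_congr fun y => ?_
        by_cases hy : y ∈ A
        · rw [Set.indicator_of_mem hy, Set.indicator_of_mem (Set.mk_mem_prod hu hy)]
        · rw [Set.indicator_of_notMem hy,
            Set.indicator_of_notMem (fun h => hy h.2)]
      · rw [Set.indicator_of_notMem hu]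
        have : ∀ y : Fin m → ℝ,
            (B ×ˢ A).indicator (fun p : X × (Fin m → ℝ) => g (p.2 - 𝒢 p.1)) (u, y) = 0 :=
          fun y => Set.indicator_of_notMem (fun h => hu h.1) _
        simp [this]
    have h2 : ∀ y, A.indicator (fun y => ∫⁻ u, B.indicator (fun u => g (y - 𝒢 u)) u ∂μ₀) y
        = ∫⁻ u, (B ×ˢ A).indicator (fun p : X × (Fin m → ℝ) => g (p.2 - 𝒢 p.1)) (u, y) ∂μ₀ := by
      intro y
      by_cases hy : y ∈ A
      · rw [Set.indicator_of_mem hy]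
        refine lintegral_congr fun u => ?_
        by_cases hu : u ∈ B
        · rw [Set.indicator_of_mem hu, Set.indicator_of_mem (Set.mk_mem_prod hu hy)]
        · rw [Set.indicator_of_notMem hu,
            Set.indicator_of_notMem (fun h => hu h.1)]
      · rw [Set.indicator_of_notMem hy]
        have : ∀ u : X,
            (B ×ˢ A).indicator (fun p : X × (Fin m → ℝ) => g (p.2 - 𝒢 p.1)) (u, y) = 0 :=
          fun u => Set.indicator_of_notMem (fun h => hy h.2) _
        simp [this]
    simp_rw [h1, h2]
    exact lintegral_lintegral_swap hm.aemeasurable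
  -- the law of Y has density ρ with respect to Lebesgue measure
  have hν : P.map Y = volume.withDensity ρ := by
    ext A hA
    have h1 : P.map Y A = (P.map fun ω => (Y ω, θ ω)) (A ×ˢ Set.univ) := by
      rw [Measure.map_apply hYm hA,
        Measure.map_apply (hYm.prodMk hθ) (hA.prod MeasurableSet.univ)]
      congr 1
      ext ω; simp
    rw [h1, hK hA MeasurableSet.univ, hswap hA MeasurableSet.univ, withDensity_apply _ hA,
      ← lintegral_indicator hA]
    refine lintegral_congr fun y => ?_
    by_cases hy : y ∈ A
    · rw [Set.indicator_of_mem hy, Set.indicator_of_mem hy]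
      simp only [Set.indicator_univ]
      exact hinner_int y
    · rw [Set.indicator_of_notMem hy, Set.indicator_of_notMem hy]
  -- the joint law is the composition-product of the law of Y with κ
  have hT : P.map (fun ω => (Y ω, θ ω)) = (P.map Y) ⊗ₘ κ := by
    haveI : IsProbabilityMeasure (P.map Y) := Measure.isProbabilityMeasure_map hYm.aemeasurable
    haveI : IsProbabilityMeasure (P.map fun ω => (Y ω, θ ω)) :=
      Measure.isProbabilityMeasure_map (hYm.prodMk hθ).aemeasurable
    refine ext_of_generate_finite _ generateFrom_prod.symm isPiSystem_prod ?_ ?_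
    · rintro s ⟨A, hA, B, hB, rfl⟩
      have hA : MeasurableSet A := hA
      have hB : MeasurableSet B := hB
      have key : ∀ y, (∫⁻ u, B.indicator (fun u => g (y - 𝒢 u)) u ∂μ₀) = ρ y * κ y B := by
        intro y
        have hL : κ y B = (ENNReal.ofReal (Z y))⁻¹ *
            ∫⁻ u in B, ENNReal.ofReal (Real.exp (-Φ u y)) ∂μ₀ := by
          rw [hκ_app, Measure.smul_apply, withDensity_apply _ hB, smul_eq_mul]
        have hgB : (∫⁻ u, B.indicator (fun u => g (y - 𝒢 u)) u ∂μ₀)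
            = ENNReal.ofReal c * ∫⁻ u in B, ENNReal.ofReal (Real.exp (-Φ u y)) ∂μ₀ := by
          rw [lintegral_indicator hB]
          simp_rw [hinner]
          rw [lintegral_const_mul _ (hdm' y)]
        rw [hL, hgB, hρdef, mul_assoc, ← mul_assoc (ENNReal.ofReal (Z y)),
          ENNReal.mul_inv_cancel (hZne0 y) (hZneT y), one_mul]
      rw [hK hA hB, hswap hA hB, Measure.compProd_apply_prod hA hB, hν,
        restrict_withDensity hA,
        lintegral_withDensity_eq_lintegral_mul _ hρm (κ.measurable_coe hB),
        ← lintegral_indicator hA]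
      refine lintegral_congr fun y => ?_
      by_cases hy : y ∈ A
      · rw [Set.indicator_of_mem hy, Set.indicator_of_mem hy]
        exact key y
      · rw [Set.indicator_of_notMem hy, Set.indicator_of_notMem hy]
    · simp
  -- conclude with the uniqueness of the conditional distribution
  have hcd := condDistrib_ae_eq_of_measure_eq_compProd_of_measurable hYm hθ (κ := κ) hT
  refine ⟨fun y => ⟨hZpos y, hZle y⟩, ?_⟩
  filter_upwards [hcd] with y hy
  rw [hy, hκ_app]
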